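/- arXiv:math/0408162 — 5 statements merged into one kernel-verified Lean document; each statement's English description precedes it below -/
import Mathlib

section
/- Let R be a commutative Noetherian ring, let 0 → X → Y → Z → 0 be a short exact sequence of finitely generated R-modules, and let W be any finitely generated R-module. Then the induced sequence of stable Hom modules Hom̲_R(W,X) → Hom̲_R(W,Y) → Hom̲_R(W,Z) is exact (the image of the first induced map equals the kernel of the second). -/
universe u

noncomputable section

variable (R : Type u) [CommRing R]

/-- A linear map `f : X → Y` factors through some finitely generated projective `R`-module.
The set of such maps is exactly the submodule `P(X,Y) ⊆ Hom_R(X,Y)` of homomorphisms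
factoring through projectives, so `f ∈ P(X,Y)` iff `FactorsThroughProjective R f`. -/
def FactorsThroughProjective {X Y : Type u} [AddCommGroup X] [Module R X]
    [AddCommGroup Y] [Module R Y] (f : X →ₗ[R] Y) : Prop :=
  ∃ Q : ModuleCat.{u} R, Module.Projective R Q ∧ Module.Finite R Q ∧
    ∃ (g : X →ₗ[R] Q) (h : Q →ₗ[R] Y), h.comp g = f

/-- Let `0 → X → Y → Z → 0` be a short exact sequence of finitely generated modules over a
commutative Noetherian ring `R`, and `W` any finitely generated `R`-module.  Then the induced
sequence of stable Hom modules `Hom̲(W,X) → Hom̲(W,Y) → Hom̲(W,Z)` is exact.  Since the maps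
on the quotients `Hom̲(W,-) = Hom(W,-)/P(W,-)` are induced by composition, exactness
(image of the first map = kernel of the second) says precisely: for every `v : W → Y`,
the class of `v` is killed by `g∘-` (i.e. `g ∘ v ∈ P(W,Z)`) iff the class of `v` is in the
image of `f∘-` (i.e. `v - f ∘ u ∈ P(W,Y)` for some `u : W → X`). -/
theorem stableHom_exact_covariant [IsNoetherianRing R]
    (X Y Z W : Type u) [AddCommGroup X] [Module R X] [AddCommGroup Y] [Module R Y]
    [AddCommGroup Z] [Module R Z] [AddCommGroup W] [Module R W]
    [Module.Finite R X] [Module.Finite R Y] [Module.Finite R Z] [Module.Finite R W]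
    (f : X →ₗ[R] Y) (g : Y →ₗ[R] Z)
    (hf : Function.Injective f) (hfg : Function.Exact f g) (hg : Function.Surjective g) :
    ∀ v : W →ₗ[R] Y,
      FactorsThroughProjective R (g.comp v) ↔
        ∃ u : W →ₗ[R] X, FactorsThroughProjective R (v - f.comp u) := by
  intro v
  constructor
  · rintro ⟨Q, hproj, hfin, q, h, hcomp⟩
    obtain ⟨h', hh'⟩ := Module.projective_lifting_property (R := R) g h hg
    have hw : ∀ x, (v - h'.comp q) x ∈ LinearMap.range f := by
      intro x
      have h1 : g ((v - h'.comp q) x) = 0 := by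
        have := congrArg (fun m => m x) hcomp
        simp only [LinearMap.comp_apply] at this ⊢
        have h2 := congrArg (fun m => m (q x)) hh'
        simp only [LinearMap.comp_apply] at h2
        simp [map_sub, h2, this]
      simpa [LinearMap.mem_range] using (hfg _).mp h1
    set e := LinearEquiv.ofInjective f hf
    set u : W →ₗ[R] X := e.symm.toLinearMap.comp
      (LinearMap.codRestrict (LinearMap.range f) (v - h'.comp q) hw) with hu
    have hfu : f.comp u = v - h'.comp q := by
      ext x
      have h4 := e.apply_symm_apply (⟨(v - h'.comp q) x, hw x⟩ : LinearMap.range f)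
      have h5 : f (e.symm (⟨(v - h'.comp q) x, hw x⟩)) = (v - h'.comp q) x :=
        congrArg Subtype.val h4
      exact h5
    refine ⟨u, Q, hproj, hfin, q, h', ?_⟩
    rw [hfu]
    ext x
    simp
  · rintro ⟨u, Q, hproj, hfin, q, h, hcomp⟩
    refine ⟨Q, hproj, hfin, q, g.comp h, ?_⟩
    have h1 : g.comp (v - f.comp u) = g.comp v := by
      ext x
      simp [hfg.apply_apply_eq_zero]
    rw [LinearMap.comp_assoc, hcomp, h1]

end
end

section
/- Let R be a commutative Noetherian ring, let 0 → X → Y → Z → 0 be a short exact sequence of finitely generated R-modules with Ext^1_R(Z,R) = 0, and let W be any finitely generated R-module. Then the induced sequence of stable Hom modules Hom̲_R(Z,W) → Hom̲_R(Y,W) → Hom̲_R(X,W) is exact (the image of the first induced map equals the kernel of the second). -/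
open CategoryTheory

universe u

noncomputable section

variable (R : Type u) [CommRing R]

/-- The `i`-th Ext module over `R` of two `R`-modules. -/
abbrev ExtMod (i : ℕ) (X Y : ModuleCat.{u} R) : ModuleCat.{u} R :=
  ((Ext R (ModuleCat.{u} R) i).obj (Opposite.op X)).obj Y

/-- Key consequence of `Ext¹(Z,R) = 0` : there is a projective module `P₀` with a surjection
`p : P₀ → Z` such that every linear map `ker p → R` extends to `P₀`. -/
lemma key_lift (Z : ModuleCat.{u} R)
    (hZ : Subsingleton (ExtMod R 1 Z (ModuleCat.of R R))) :
    ∃ (P₀ : ModuleCat.{u} R) (p : P₀ →ₗ[R] Z), Module.Projective R P₀ ∧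
      Function.Surjective p ∧
      ∀ φ : (LinearMap.ker p) →ₗ[R] R, ∃ ψ : P₀ →ₗ[R] R,
        ψ ∘ₗ (LinearMap.ker p).subtype = φ := by
  obtain ⟨P⟩ : Nonempty (ProjectiveResolution Z) := ⟨ProjectiveResolution.of Z⟩
  set M := ModuleCat.of R R with hM
  let P₀ := P.complex.X 0
  let P₁ := P.complex.X 1
  let p : P₀ →ₗ[R] Z := (P.π.f 0).hom
  have hP₀ : Module.Projective R P₀ := by
    rw [IsProjective.iff_projective]
    exact P.projective 0
  have hp : Function.Surjective p :=
    (ModuleCat.epi_iff_surjective (P.π.f 0)).mp inferInstance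
  have hrange : LinearMap.range (show P₁ →ₗ[R] P₀ from (P.complex.d 1 0).hom)
      = LinearMap.ker p := by
    exact (ShortComplex.moduleCat_exact_iff_range_eq_ker _).mp P.exact₀
  -- homology vanishing
  haveI : Subsingleton ((P.complex.linearYonedaObj R M).homology 1) := by
    haveI := hZ
    exact (((forget (ModuleCat R)).mapIso (P.isoExt 1 M).symm).toEquiv).subsingleton
  have hex : (P.complex.linearYonedaObj R M).ExactAt 1 :=
    (HomologicalComplex.exactAt_iff_isZero_homology _ 1).2
      (ModuleCat.isZero_of_subsingleton _)
  have hex' := (HomologicalComplex.exactAt_iff' (P.complex.linearYonedaObj R M)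
      0 1 2 (by simp) (by simp)).1 hex
  rw [ShortComplex.moduleCat_exact_iff] at hex'
  have hdfun : ∀ (i j : ℕ) (y : P.complex.X i ⟶ M),
      (P.complex.linearYonedaObj R M).d i j y = P.complex.d j i ≫ y := fun i j y => rfl
  refine ⟨P₀, p, hP₀, hp, fun φ => ?_⟩
  have hd : ∀ x : P₁, P.complex.d 1 0 x ∈ LinearMap.ker p := by
    intro x
    rw [← hrange]
    exact ⟨x, rfl⟩
  let c : P₁ ⟶ M :=
    ModuleCat.ofHom (φ ∘ₗ (LinearMap.codRestrict (LinearMap.ker p) (P.complex.d 1 0).hom hd) : P₁ →ₗ[R] R)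
  have hc : (P.complex.linearYonedaObj R M).d 1 2 c = 0 := by
    rw [hdfun]
    apply ModuleCat.hom_ext
    apply LinearMap.ext
    intro x
    have h0 : P.complex.d 1 0 (P.complex.d 2 1 x) = 0 := by
      have := P.complex.d_comp_d 2 1 0
      exact congrArg (fun f => f.hom x) this
    show φ (⟨P.complex.d 1 0 (P.complex.d 2 1 x), _⟩) = 0
    have : (⟨P.complex.d 1 0 (P.complex.d 2 1 x), hd _⟩ :
        LinearMap.ker p) = 0 := by
      ext
      exact h0
    rw [this, map_zero]
  obtain ⟨ψ, hψ⟩ := hex' c hc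
  let ψ' : P.complex.X 0 ⟶ M := ψ
  have hψ2 : (P.complex.linearYonedaObj R M).d 0 1 ψ' = c := hψ
  rw [hdfun] at hψ2
  have hψ3 : (CategoryStruct.comp (P.complex.d 1 0) ψ' : P₁ ⟶ M) = c := hψ2
  refine ⟨ψ'.hom, ?_⟩
  ext ⟨k, hk⟩
  obtain ⟨x, hx⟩ : k ∈ LinearMap.range (show P₁ →ₗ[R] P₀ from (P.complex.d 1 0).hom) := by
    rw [hrange]; exact hk
  have h1 : ψ' (P.complex.d 1 0 x) = c x := congrArg (fun f => f.hom x) hψ3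
  have h2 : c x = φ ⟨P.complex.d 1 0 x, hd x⟩ := rfl
  show ψ' k = φ ⟨k, hk⟩
  subst hx
  rw [h1, h2]

/-- Upgrade of `key_lift`: maps from the kernel into any finitely generated projective module
extend. -/
lemma key_lift_proj (Z : ModuleCat.{u} R)
    (hZ : Subsingleton (ExtMod R 1 Z (ModuleCat.of R R))) :
    ∃ (P₀ : ModuleCat.{u} R) (p : P₀ →ₗ[R] Z), Module.Projective R P₀ ∧
      Function.Surjective p ∧
      ∀ (Q : ModuleCat.{u} R), Module.Projective R Q → Module.Finite R Q →
        ∀ φ : (LinearMap.ker p) →ₗ[R] Q, ∃ ψ : P₀ →ₗ[R] Q,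
          ψ ∘ₗ (LinearMap.ker p).subtype = φ := by
  obtain ⟨P₀, p, hP₀, hp, hlift⟩ := key_lift R Z hZ
  refine ⟨P₀, p, hP₀, hp, fun Q hQp hQf φ => ?_⟩
  haveI := hQp; haveI := hQf
  obtain ⟨n, π, hπ⟩ := Module.Finite.exists_fin' R Q
  obtain ⟨s, hs⟩ := Module.projective_lifting_property π (LinearMap.id) hπ
  choose ψ hψ using fun i : Fin n => hlift ((LinearMap.proj i) ∘ₗ s ∘ₗ φ)
  refine ⟨π ∘ₗ LinearMap.pi ψ, ?_⟩
  ext k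
  have h1 : (fun i => ψ i (k : P₀)) = s (φ k) := by
    funext i
    exact DFunLike.congr_fun (hψ i) k
  show π (fun i => ψ i (k : P₀)) = φ k
  rw [h1]
  exact DFunLike.congr_fun hs (φ k)

/-- Let `0 → X → Y → Z → 0` be a short exact sequence of finitely generated modules over a
commutative Noetherian ring `R` with `Ext¹_R(Z,R) = 0`, and let `W` be any finitely generated
`R`-module.  Then the induced sequence of stable Hom modules
`Hom̲(Z,W) → Hom̲(Y,W) → Hom̲(X,W)` is exact.  Since the maps on the quotients
`Hom̲(-,W) = Hom(-,W)/P(-,W)` are induced by precomposition, exactness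
(image of the first map = kernel of the second) says precisely: for every `v : Y → W`,
`v ∘ f ∈ P(X,W)` iff `v - u ∘ g ∈ P(Y,W)` for some `u : Z → W`. -/
theorem stableHom_exact_contravariant [IsNoetherianRing R]
    (X Y Z W : ModuleCat.{u} R)
    [Module.Finite R X] [Module.Finite R Y] [Module.Finite R Z] [Module.Finite R W]
    (f : X →ₗ[R] Y) (g : Y →ₗ[R] Z)
    (hf : Function.Injective f) (hfg : Function.Exact f g) (hg : Function.Surjective g)
    (hZ : Subsingleton (ExtMod R 1 Z (ModuleCat.of R R))) :
    ∀ v : Y →ₗ[R] W,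
      FactorsThroughProjective R (v.comp f) ↔
        ∃ u : Z →ₗ[R] W, FactorsThroughProjective R (v - u.comp g) := by
  intro v
  constructor
  · rintro ⟨Q, hQp, hQf, α, β, hβα⟩
    obtain ⟨P₀, p, hP₀, hp, hlift⟩ := key_lift_proj R Z hZ
    haveI := hP₀
    obtain ⟨h, hh⟩ := Module.projective_lifting_property g p hg
    -- the map `k' : ker p → X` with `f ∘ k' = h|_{ker p}`
    have hmem : ∀ k : LinearMap.ker p,
        h ((LinearMap.ker p).subtype k) ∈ LinearMap.range f := by
      rintro ⟨k, hk⟩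
      have h1 : g (h k) = p k := DFunLike.congr_fun hh k
      have h2 : g (h k) = 0 := by rw [h1]; exact hk
      exact (hfg (h k)).mp h2
    let e := LinearEquiv.ofInjective f hf
    let k' : (LinearMap.ker p) →ₗ[R] X :=
      (e.symm : LinearMap.range f →ₗ[R] X) ∘ₗ
        LinearMap.codRestrict (LinearMap.range f)
          (h ∘ₗ (LinearMap.ker p).subtype) hmem
    have hk' : ∀ k : LinearMap.ker p, f (k' k) = h (k : P₀) := by
      intro k
      have h1 : f (k' k) = (e (k' k) : Y) := rfl
      rw [h1]
      show ((e (e.symm ⟨h (k : P₀), hmem k⟩)) : Y) = h (k : P₀)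
      rw [LinearEquiv.apply_symm_apply]
    obtain ⟨E, hE⟩ := hlift Q hQp hQf (α ∘ₗ k')
    have hE' : ∀ k : LinearMap.ker p, E (k : P₀) = α (k' k) :=
      fun k => DFunLike.congr_fun hE k
    -- the surjection θ and the map γ
    let θ : (P₀ × X : Type u) →ₗ[R] Y := LinearMap.coprod h f
    let γ : (P₀ × X : Type u) →ₗ[R] Q := LinearMap.coprod E α
    have hθ : Function.Surjective θ := by
      intro y
      obtain ⟨q, hq⟩ := hp (g y)
      have hgh : g (h q) = p q := DFunLike.congr_fun hh q
      have hy0 : g (y - h q) = 0 := by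
        rw [map_sub, hgh, hq, sub_self]
      obtain ⟨x, hx⟩ := (hfg (y - h q)).mp hy0
      exact ⟨(q, x), by simp [θ, LinearMap.coprod_apply, hx]⟩
    have hker : LinearMap.ker θ ≤ LinearMap.ker γ := by
      rintro ⟨q, x⟩ hqx
      have hqx' : h q + f x = 0 := hqx
      have hq0 : q ∈ LinearMap.ker p := by
        have h1 : p q = g (h q) := (DFunLike.congr_fun hh q).symm
        have h2 : h q = -f x := eq_neg_of_add_eq_zero_left hqx'
        have h3 : g (f x) = 0 := hfg.apply_apply_eq_zero x
        rw [LinearMap.mem_ker, h1, h2, map_neg, h3, neg_zero]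
      have hx : x = -k' ⟨q, hq0⟩ := by
        apply hf
        rw [map_neg, hk' ⟨q, hq0⟩]
        show f x = -(h q)
        exact eq_neg_of_add_eq_zero_right hqx'
      have hEq : E q = α (k' ⟨q, hq0⟩) := hE' ⟨q, hq0⟩
      show E q + α x = 0
      rw [hx, map_neg, hEq, add_neg_cancel]
    let θe := LinearMap.quotKerEquivOfSurjective θ hθ
    let A : (Y : Type u) →ₗ[R] Q :=
      (Submodule.liftQ (LinearMap.ker θ) γ hker) ∘ₗ (θe.symm : Y →ₗ[R] _)
    have hA : ∀ z : P₀ × X, A (θ z) = γ z := by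
      intro z
      have h1 : θe (Submodule.Quotient.mk z) = θ z := rfl
      have h2 : θe.symm (θ z) = Submodule.Quotient.mk z := by
        rw [← h1, LinearEquiv.symm_apply_apply]
      show Submodule.liftQ _ γ hker (θe.symm (θ z)) = γ z
      rw [h2]
      exact Submodule.liftQ_apply _ γ z
    have hαf : ∀ x : X, A (f x) = α x := by
      intro x
      have h1 : f x = θ ((0 : P₀), x) := by
        show f x = h 0 + f x
        rw [map_zero, zero_add]
      rw [h1, hA]
      show E 0 + α x = α x
      rw [map_zero, zero_add]
    have hker2 : LinearMap.ker g ≤ LinearMap.ker (v - β ∘ₗ A) := by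
      intro y hy
      obtain ⟨x, hx⟩ := (hfg y).mp hy
      have hv : v (f x) = β (α x) := (DFunLike.congr_fun hβα x).symm
      show v y - β (A y) = 0
      rw [← hx, hαf, hv, sub_self]
    let ge := LinearMap.quotKerEquivOfSurjective g hg
    let u : (Z : Type u) →ₗ[R] W :=
      (Submodule.liftQ (LinearMap.ker g) (v - β ∘ₗ A) hker2) ∘ₗ (ge.symm : Z →ₗ[R] _)
    have hu : ∀ y : Y, u (g y) = v y - β (A y) := by
      intro y
      have h1 : ge (Submodule.Quotient.mk y) = g y := rfl
      have h2 : ge.symm (g y) = Submodule.Quotient.mk y := by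
        rw [← h1, LinearEquiv.symm_apply_apply]
      show Submodule.liftQ _ _ hker2 (ge.symm (g y)) = _
      rw [h2]
      exact Submodule.liftQ_apply _ _ y
    refine ⟨u, Q, hQp, hQf, A, β, ?_⟩
    ext y
    show β (A y) = v y - u (g y)
    rw [hu, sub_sub_cancel]
  · rintro ⟨u, Q, hQp, hQf, a, b, hba⟩
    refine ⟨Q, hQp, hQf, a ∘ₗ f, b, ?_⟩
    rw [← LinearMap.comp_assoc, hba]
    ext x
    show v (f x) - u (g (f x)) = v (f x)
    rw [hfg.apply_apply_eq_zero x, map_zero, sub_zero]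

end
end

section
/- Let R be a commutative Noetherian ring and let C be a subcategory of finitely generated R-modules that is extension-closed and closed under syzygies. Then C is closed under kernels of epimorphisms, i.e. C is a resolving subcategory. -/
universe u

noncomputable section

variable (R : Type u) [CommRing R]

/-- A subcategory of the category of finitely generated `R`-modules: a class of finitely
generated `R`-modules closed under isomorphism, finite direct sums and direct summands,
and containing all finitely generated projective `R`-modules. -/
structure Subcat (R : Type u) [CommRing R] where
  mem : ModuleCat.{u} R → Prop
  finite_of_mem : ∀ X : ModuleCat.{u} R, mem X → Module.Finite R X
  mem_of_iso : ∀ X Y : ModuleCat.{u} R, (X ≃ₗ[R] Y) → mem X → mem Y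
  mem_prod : ∀ X Y : ModuleCat.{u} R, mem X → mem Y → mem (ModuleCat.of R (X × Y))
  mem_of_prod_left : ∀ X Y : ModuleCat.{u} R, mem (ModuleCat.of R (X × Y)) → mem X
  mem_of_projective : ∀ P : ModuleCat.{u} R,
    Module.Projective R P → Module.Finite R P → mem P

/-- `C` is extension-closed: for every short exact sequence `0 → X → Y → Z → 0` of finitely
generated `R`-modules with `X, Z ∈ C` one has `Y ∈ C`. -/
def ExtensionClosed (C : Subcat R) : Prop :=
  ∀ X Y Z : ModuleCat.{u} R, Module.Finite R Y →
    ∀ (f : X →ₗ[R] Y) (g : Y →ₗ[R] Z),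
      Function.Injective f → Function.Exact f g → Function.Surjective g →
      C.mem X → C.mem Z → C.mem Y

/-- `C` is closed under syzygies: for every short exact sequence `0 → X → P → Z → 0` of
finitely generated `R`-modules with `P` projective and `Z ∈ C` one has `X ∈ C`. -/
def SyzygyClosed (C : Subcat R) : Prop :=
  ∀ X P Z : ModuleCat.{u} R, Module.Finite R X →
    Module.Projective R P → Module.Finite R P →
    ∀ (f : X →ₗ[R] P) (g : P →ₗ[R] Z),
      Function.Injective f → Function.Exact f g → Function.Surjective g →
      C.mem Z → C.mem X

/-- `C` is closed under kernels of epimorphisms: for every short exact sequence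
`0 → X → Y → Z → 0` of finitely generated `R`-modules with `Y, Z ∈ C` one has `X ∈ C`. -/
def KernelClosed (C : Subcat R) : Prop :=
  ∀ X Y Z : ModuleCat.{u} R, Module.Finite R X →
    ∀ (f : X →ₗ[R] Y) (g : Y →ₗ[R] Z),
      Function.Injective f → Function.Exact f g → Function.Surjective g →
      C.mem Y → C.mem Z → C.mem X

/-- Over a commutative Noetherian ring, a subcategory of finitely generated modules that is
extension-closed and closed under syzygies is closed under kernels of epimorphisms
(i.e. it is a resolving subcategory). -/
theorem kernelClosed_of_extensionClosed_of_syzygyClosed [IsNoetherianRing R]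
    (C : Subcat R) (hext : ExtensionClosed R C) (hsyz : SyzygyClosed R C) :
    KernelClosed R C := by
  intro X Y Z hXfin f g hf hfg hg hY hZ
  have hYfin : Module.Finite R Y := C.finite_of_mem Y hY
  have hZfin : Module.Finite R Z := C.finite_of_mem Z hZ
  obtain ⟨n, p, hp⟩ := Module.Finite.exists_fin' R Z
  set Pm : ModuleCat.{u} R := ModuleCat.of R (Fin n → R) with hPm
  have hPproj : Module.Projective R Pm := inferInstanceAs (Module.Projective R (Fin n → R))
  have hPfin : Module.Finite R Pm := inferInstanceAs (Module.Finite R (Fin n → R))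
  -- the syzygy `Ω = ker p` of `Z`
  set Ω : ModuleCat.{u} R := ModuleCat.of R (LinearMap.ker p) with hΩ
  have hΩfin : Module.Finite R Ω := Module.Finite.iff_fg.mpr (IsNoetherian.noetherian _)
  have hexΩ : Function.Exact ((LinearMap.ker p).subtype) p := by
    intro z
    constructor
    · intro hz; exact ⟨⟨z, hz⟩, rfl⟩
    · rintro ⟨⟨w, hw⟩, rfl⟩; exact hw
  have hΩmem : C.mem Ω :=
    hsyz Ω Pm Z hΩfin hPproj hPfin (LinearMap.ker p).subtype p
      (Submodule.injective_subtype _) hexΩ hp hZ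
  -- the pullback `E = Y ×_Z P`
  set h : (Y × (Fin n → R)) →ₗ[R] Z :=
    g.comp (LinearMap.fst R Y (Fin n → R)) - p.comp (LinearMap.snd R Y (Fin n → R)) with hh
  set E : Submodule R (Y × (Fin n → R)) := LinearMap.ker h with hE
  set Em : ModuleCat.{u} R := ModuleCat.of R E with hEm
  have hEfin : Module.Finite R Em := Module.Finite.iff_fg.mpr (IsNoetherian.noetherian _)
  have memE : ∀ yq : Y × (Fin n → R), yq ∈ E ↔ g yq.1 = p yq.2 := by
    intro yq
    simp only [hE, LinearMap.mem_ker, hh, LinearMap.sub_apply, LinearMap.comp_apply,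
      LinearMap.fst_apply, LinearMap.snd_apply, sub_eq_zero]
  -- the map `Ω → E`
  set i : Ω →ₗ[R] E :=
    LinearMap.codRestrict E ((LinearMap.inr R Y (Fin n → R)).comp (LinearMap.ker p).subtype)
      (by
        rintro ⟨w, hw⟩
        rw [memE]
        simp; exact hw.symm) with hi
  have hiinj : Function.Injective i := by
    intro a b hab
    have := congrArg (fun e : E => (e : Y × (Fin n → R)).2) hab
    simp only [hi, LinearMap.codRestrict_apply, LinearMap.comp_apply,
      LinearMap.inr_apply] at this
    exact Subtype.ext this
  -- the projection `E → Y`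
  set π₁ : E →ₗ[R] (Y : Type u) := (LinearMap.fst R Y (Fin n → R)).comp E.subtype with hπ₁
  have hπ₁surj : Function.Surjective π₁ := by
    intro y
    obtain ⟨q, hq⟩ := hp (g y)
    exact ⟨⟨(y, q), (memE _).mpr hq.symm⟩, rfl⟩
  have hexi : Function.Exact i π₁ := by
    rintro ⟨⟨y, q⟩, hyq⟩
    constructor
    · intro hy
      have hy' : y = 0 := hy
      have hq : q ∈ LinearMap.ker p := by
        have := (memE _).mp hyq
        simpa [hy'] using this.symm
      exact ⟨⟨q, hq⟩, by apply Subtype.ext; simp [hi, hy']; rfl⟩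
    · rintro ⟨⟨w, hw⟩, he⟩
      rw [← he]
      simp [hπ₁, hi]
  -- `E ∈ C` by extension-closedness
  have hEmem : C.mem Em := hext Ω Em Y hEfin i π₁ hiinj hexi hπ₁surj hΩmem hY
  -- the map `X → E`
  set j : X →ₗ[R] E :=
    LinearMap.codRestrict E ((LinearMap.inl R Y (Fin n → R)).comp f)
      (by
        intro x
        rw [memE]
        simpa using hfg.apply_apply_eq_zero x) with hj
  have hjinj : Function.Injective j := by
    intro a b hab
    apply hf
    have := congrArg (fun e : E => (e : Y × (Fin n → R)).1) hab
    simpa [hj] using this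
  -- the projection `E → P`
  set π₂ : E →ₗ[R] (Fin n → R) := (LinearMap.snd R Y (Fin n → R)).comp E.subtype with hπ₂
  have hπ₂surj : Function.Surjective π₂ := by
    intro q
    obtain ⟨y, hy⟩ := hg (p q)
    exact ⟨⟨(y, q), (memE _).mpr hy⟩, rfl⟩
  have hexj : Function.Exact j π₂ := by
    rintro ⟨⟨y, q⟩, hyq⟩
    constructor
    · intro hq
      have hq' : q = 0 := hq
      have hy : g y = 0 := by
        have := (memE _).mp hyq
        simpa [hq'] using this
      obtain ⟨x, hx⟩ := (hfg y).mp hy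
      exact ⟨x, by apply Subtype.ext; simp [hj, hx, hq']⟩
    · rintro ⟨x, he⟩
      rw [← he]
      simp [hπ₂, hj]
  -- split the sequence `0 → X → E → P → 0` using projectivity of `P`
  obtain ⟨s, hs⟩ := Module.projective_lifting_property π₂ LinearMap.id hπ₂surj
  obtain ⟨e, -, -⟩ := hexj.splitSurjectiveEquiv hjinj ⟨s, hs⟩
  have hXPmem : C.mem (ModuleCat.of R (↑X × ↑Pm)) :=
    C.mem_of_iso Em (ModuleCat.of R (↑X × ↑Pm)) e hEmem
  exact C.mem_of_prod_left X Pm hXPmem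


end
end

section
/- Let R be a commutative Noetherian ring, let 0 → A → B → C → 0 be a short exact sequence of finitely generated R-modules with Ext^1_R(C,R) = 0, and let 0 → A → P → Y → 0 be a short exact sequence with P a finitely generated projective R-module. Then there exists a short exact sequence 0 → B → C ⊕ P → Y → 0 of R-modules. -/
open CategoryTheory

universe u

noncomputable section

variable (R : Type u) [CommRing R]

namespace ExtAux

open CategoryTheory Limits

variable {R}

lemma descend {M N P : Type u} [AddCommGroup M] [AddCommGroup N] [AddCommGroup P]
    [Module R M] [Module R N] [Module R P]
    (ρ : M →ₗ[R] N) (hρ : Function.Surjective ρ) (σ : M →ₗ[R] P)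
    (h : ∀ m, ρ m = 0 → σ m = 0) : ∃ t : N →ₗ[R] P, ∀ m, t (ρ m) = σ m := by
  refine ⟨(Submodule.liftQ (LinearMap.ker ρ) σ (fun m hm => h m hm)) ∘ₗ
    (ρ.quotKerEquivOfSurjective hρ).symm.toLinearMap, fun m => ?_⟩
  have : (ρ.quotKerEquivOfSurjective hρ).symm (ρ m) = Submodule.Quotient.mk m := by
    rw [LinearEquiv.symm_apply_eq]
    simp [LinearMap.quotKerEquivOfSurjective, LinearMap.quotKerEquivRange_apply_mk]
  simp [this]
  rfl

lemma ext_lift (C N : ModuleCat.{u} R) (hN : Subsingleton (ExtMod R 1 C N))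
    (Q : ProjectiveResolution C)
    (u : Q.complex.X 1 →ₗ[R] N)
    (hu : u ∘ₗ (Q.complex.d 2 1).hom = 0) :
    ∃ v : Q.complex.X 0 →ₗ[R] N,
      v ∘ₗ (Q.complex.d 1 0).hom = u := by
  set K := Q.complex.linearYonedaObj R N with hK
  have hsub : Subsingleton (K.homology 1) :=
    Equiv.subsingleton (((forget (ModuleCat R)).mapIso (Q.isoExt 1 N)).toEquiv.symm)
  have hz : IsZero (K.homology 1) := ModuleCat.isZero_of_subsingleton _
  have hex : K.ExactAt 1 := by
    rw [HomologicalComplex.exactAt_iff_isZero_homology]; exact hz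
  rw [K.exactAt_iff' 0 1 2 (by simp) (by simp)] at hex
  rw [ShortComplex.moduleCat_exact_iff] at hex
  obtain ⟨v, hv⟩ := hex (ModuleCat.ofHom u) (by
    show Q.complex.d 2 1 ≫ ModuleCat.ofHom u = 0
    ext x
    exact LinearMap.congr_fun hu x)
  exact ⟨v.hom, congrArg ModuleCat.Hom.hom hv⟩

lemma ext_lift_proj (C P : ModuleCat.{u} R) [Module.Finite R P] (hP : Module.Projective R P)
    (hC : Subsingleton (ExtMod R 1 C (ModuleCat.of R R)))
    (Q : ProjectiveResolution C)
    (u : Q.complex.X 1 →ₗ[R] P)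
    (hu : u ∘ₗ (Q.complex.d 2 1).hom = 0) :
    ∃ v : Q.complex.X 0 →ₗ[R] P,
      v ∘ₗ (Q.complex.d 1 0).hom = u := by
  obtain ⟨n, pr, hpr⟩ := Module.Finite.exists_fin' R P
  obtain ⟨s, hs⟩ := Module.projective_lifting_property (h := hP) pr LinearMap.id
    (LinearMap.range_eq_top.1 (LinearMap.range_eq_top.2 hpr))
  have hcomp : ∀ j : Fin n, ∃ v : Q.complex.X 0 →ₗ[R] (ModuleCat.of R R),
      v ∘ₗ (Q.complex.d 1 0).hom
        = (LinearMap.proj j) ∘ₗ (s ∘ₗ u) := by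
    intro j
    refine ext_lift C (ModuleCat.of R R) hC Q _ ?_
    rw [LinearMap.comp_assoc, LinearMap.comp_assoc, hu]
    simp
  choose w hw using hcomp
  refine ⟨pr ∘ₗ LinearMap.pi w, ?_⟩
  have h1 : (LinearMap.pi w) ∘ₗ (Q.complex.d 1 0).hom
      = s ∘ₗ u := by
    ext x j
    exact congrArg (fun (m : Q.complex.X 1 →ₗ[R] (ModuleCat.of R R)) => m x) (hw j)
  rw [LinearMap.comp_assoc, h1, ← LinearMap.comp_assoc, hs, LinearMap.id_comp]

/-- The key step: a map `A → P` extends along `A → B` when `Ext¹(C, P) = 0`. -/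
lemma extend_along (A B C P : ModuleCat.{u} R) [Module.Finite R P]
    (hP : Module.Projective R P)
    (hC : Subsingleton (ExtMod R 1 C (ModuleCat.of R R)))
    (f : A →ₗ[R] B) (g : B →ₗ[R] C)
    (hf : Function.Injective f) (hfg : Function.Exact f g) (hg : Function.Surjective g)
    (a : A →ₗ[R] P) :
    ∃ t : B →ₗ[R] P, t ∘ₗ f = a := by
  let Q : ProjectiveResolution C := ProjectiveResolution.of C
  let d1 : Q.complex.X 1 →ₗ[R] Q.complex.X 0 := (Q.complex.d 1 0).hom
  let d2 : Q.complex.X 2 →ₗ[R] Q.complex.X 1 := (Q.complex.d 2 1).hom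
  let π0 : Q.complex.X 0 →ₗ[R] C := (Q.π.f 0).hom
  have hπ0 : Function.Surjective π0 :=
    (ModuleCat.epi_iff_surjective (Q.π.f 0)).mp inferInstance
  have hgepi : Epi (ModuleCat.ofHom g : B ⟶ C) := (ModuleCat.epi_iff_surjective (ModuleCat.ofHom g : B ⟶ C)).mpr hg
  let φ : Q.complex.X 0 →ₗ[R] B := (@Projective.factorThru _ _ _ _ _ _ (Q.π.f 0) (ModuleCat.ofHom g : B ⟶ C) hgepi).hom
  have hφ : ∀ x, g (φ x) = π0 x := fun x =>
    congrArg (fun (m : Q.complex.X 0 ⟶ C) => m x)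
      (@Projective.factorThru_comp _ _ _ _ _ _ (Q.π.f 0) (ModuleCat.ofHom g : B ⟶ C) hgepi)
  have hdπ : ∀ x, π0 (d1 x) = 0 := fun x =>
    congrArg (fun (m : Q.complex.X 1 ⟶ C) => m x) Q.complex_d_comp_π_f_zero
  have hker : LinearMap.ker g = LinearMap.range f := hfg.linearMap_ker_eq
  -- exactness of resolution at 0
  have hex0 : ∀ x, π0 x = 0 → ∃ z, d1 z = x := by
    have := (ShortComplex.moduleCat_exact_iff _).mp Q.exact₀
    exact fun x hx => this x hx
  -- the map ψ : X1 → A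
  have hmem : ∀ x, φ (d1 x) ∈ LinearMap.range f := by
    intro x
    rw [← hker, LinearMap.mem_ker, hφ, hdπ]
  let e : A ≃ₗ[R] LinearMap.range f := LinearEquiv.ofInjective f hf
  let ψ : Q.complex.X 1 →ₗ[R] A :=
    e.symm.toLinearMap ∘ₗ ((φ ∘ₗ d1).codRestrict (LinearMap.range f) hmem)
  have hψ : ∀ x, f (ψ x) = φ (d1 x) := by
    intro x
    have : (e (ψ x) : B) = φ (d1 x) := by
      simp [ψ, e, LinearMap.codRestrict]
    simpa [e, LinearEquiv.ofInjective_apply] using this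
  -- the cocycle a ∘ ψ
  have hcocycle : (a ∘ₗ ψ) ∘ₗ d2 = 0 := by
    ext x
    have h1 : f (ψ (d2 x)) = 0 := by
      rw [hψ]
      have : d1 (d2 x) = 0 :=
        congrArg (fun (m : Q.complex.X 2 ⟶ Q.complex.X 0) => m x) (Q.complex.d_comp_d 2 1 0)
      rw [this, map_zero]
    have : ψ (d2 x) = 0 := hf (by simpa using h1)
    simp [this]
  obtain ⟨τ, hτ⟩ := ext_lift_proj C P hP hC Q (a ∘ₗ ψ) hcocycle
  have hτ' : ∀ x, τ (d1 x) = a (ψ x) := fun x =>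
    congrArg (fun (m : Q.complex.X 1 →ₗ[R] P) => m x) hτ
  -- descend σ = (τ, a) along ρ = (φ, f)
  let ρ : (Q.complex.X 0 × A) →ₗ[R] B := φ.coprod f
  let σ : (Q.complex.X 0 × A) →ₗ[R] P := τ.coprod a
  have hρ : Function.Surjective ρ := by
    intro bb
    obtain ⟨x, hx⟩ := hπ0 (g bb)
    have : g (bb - φ x) = 0 := by rw [map_sub, hφ, hx, sub_self]
    obtain ⟨y, hy⟩ := (hfg (bb - φ x)).mp this
    exact ⟨(x, y), by simp [ρ, hy]⟩
  have hk : ∀ m, ρ m = 0 → σ m = 0 := by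
    rintro ⟨x, y⟩ hm
    simp only [ρ, LinearMap.coprod_apply] at hm
    have hx0 : π0 x = 0 := by
      have : g (φ x + f y) = 0 := by rw [hm, map_zero]
      rw [map_add, hφ] at this
      have hgf : g (f y) = 0 := by
        rw [← LinearMap.mem_ker, hker]; exact ⟨y, rfl⟩
      rw [hgf, add_zero] at this
      exact this
    obtain ⟨z, hz⟩ := hex0 x hx0
    have hyz : f y = - f (ψ z) := by
      rw [hψ, hz]
      have : f y = - φ x := by
        rw [eq_neg_iff_add_eq_zero, add_comm]; exact hm
      rw [this]
    have hy : y = - ψ z := hf (by simpa using hyz)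
    simp only [σ, LinearMap.coprod_apply, hy, map_neg, ← hz, hτ' z]
    abel
  obtain ⟨t, ht⟩ := descend ρ hρ σ hk
  refine ⟨t, ?_⟩
  ext y
  have := ht (0, y)
  simpa [ρ, σ] using this

end ExtAux

/-- Let `R` be a commutative Noetherian ring, let `0 → A → B → C → 0` be a short exact
sequence of finitely generated `R`-modules with `Ext¹_R(C,R) = 0`, and let `0 → A → P → Y → 0`
be a short exact sequence with `P` finitely generated projective.  Then there is a short exact
sequence `0 → B → C ⊕ P → Y → 0`. -/
theorem exists_ses_pushout [IsNoetherianRing R]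
    (A B C Y P : ModuleCat.{u} R)
    [Module.Finite R A] [Module.Finite R B] [Module.Finite R C] [Module.Finite R Y]
    [Module.Finite R P] (hP : Module.Projective R P)
    (hC : Subsingleton (ExtMod R 1 C (ModuleCat.of R R)))
    (f : A →ₗ[R] B) (g : B →ₗ[R] C)
    (hf : Function.Injective f) (hfg : Function.Exact f g) (hg : Function.Surjective g)
    (a : A →ₗ[R] P) (b : P →ₗ[R] Y)
    (ha : Function.Injective a) (hab : Function.Exact a b) (hb : Function.Surjective b) :
    ∃ (i : B →ₗ[R] C × P) (q : C × P →ₗ[R] Y),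
      Function.Injective i ∧ Function.Exact i q ∧ Function.Surjective q := by
  obtain ⟨t, ht⟩ := ExtAux.extend_along A B C P hP hC f g hf hfg hg a
  have ht' : ∀ x, t (f x) = a x := fun x =>
    congrArg (fun (m : A →ₗ[R] P) => m x) ht
  -- β : C → Y with β ∘ g = b ∘ t
  obtain ⟨β, hβ⟩ := ExtAux.descend g hg (b ∘ₗ t) (by
    intro m hm
    obtain ⟨x, hx⟩ := (hfg m).mp hm
    simp [← hx, ht' x, hab.apply_apply_eq_zero])
  refine ⟨g.prod t, (b ∘ₗ LinearMap.snd R C P) - (β ∘ₗ LinearMap.fst R C P), ?_, ?_, ?_⟩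
  · -- injectivity
    intro x y hxy
    rw [← sub_eq_zero, ← map_sub] at hxy
    have h1 : g (x - y) = 0 := congrArg Prod.fst hxy
    have h2 : t (x - y) = 0 := congrArg Prod.snd hxy
    obtain ⟨z, hz⟩ := (hfg _).mp h1
    rw [← hz, ht' z] at h2
    have : z = 0 := ha (by simpa using h2)
    rw [this, map_zero] at hz
    rw [← sub_eq_zero, ← hz]
  · -- exactness
    rintro ⟨c, p⟩
    constructor
    · intro hq
      simp only [LinearMap.sub_apply, LinearMap.comp_apply, LinearMap.snd_apply,
        LinearMap.fst_apply, sub_eq_zero] at hq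
      obtain ⟨x0, hx0⟩ := hg c
      have : b (p - t x0) = 0 := by
        rw [map_sub, hq, ← hx0, hβ x0]
        simp
      obtain ⟨z, hz⟩ := (hab _).mp this
      refine ⟨x0 + f z, ?_⟩
      have hgx : g (x0 + f z) = c := by
        have : g (f z) = 0 := hfg.apply_apply_eq_zero z
        rw [map_add, this, add_zero, hx0]
      have htx : t (x0 + f z) = p := by
        rw [map_add, ht' z, hz]
        abel
      simp [LinearMap.prod_apply, hgx, htx, Prod.ext_iff]
    · rintro ⟨x, hx⟩
      have hgc : g x = c := congrArg Prod.fst hx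
      have htp : t x = p := congrArg Prod.snd hx
      simp [← hgc, ← htp, hβ x]
  · -- surjectivity
    intro y
    obtain ⟨p, hp⟩ := hb y
    exact ⟨(0, p), by simp [hp]⟩

end
end

section
/- Let R be a commutative Noetherian local ring that is Artinian and injective as a module over itself (an Artinian Gorenstein ring). Then every finitely generated R-module is totally reflexive. -/
open CategoryTheory

universe u

noncomputable section

variable (R : Type u) [CommRing R]

/-- A finitely generated `R`-module `X` is totally reflexive (has G-dimension zero) if the
canonical evaluation map `X → Hom_R(Hom_R(X,R),R)` is an isomorphism and
`Ext^i_R(X,R) = 0` and `Ext^i_R(Hom_R(X,R),R) = 0` for all `i > 0`. -/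
def IsTotallyReflexive (X : ModuleCat.{u} R) : Prop :=
  Module.Finite R X ∧
  Function.Bijective (Module.Dual.eval R X) ∧
  (∀ i : ℕ, 0 < i → Subsingleton (ExtMod R i X (ModuleCat.of R R))) ∧
  (∀ i : ℕ, 0 < i →
    Subsingleton (ExtMod R i (ModuleCat.of R (Module.Dual R X)) (ModuleCat.of R R)))

variable {R}

/-- If `R` is self-injective, a linear functional that kills the kernel of `f` extends
along `f`. -/
lemma extend_of_le_ker (hinj : Module.Injective R R)
    {A B : Type u} [AddCommGroup A] [AddCommGroup B] [Module R A] [Module R B]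
    (f : A →ₗ[R] B) (g : A →ₗ[R] R) (hle : LinearMap.ker f ≤ LinearMap.ker g) :
    ∃ h : B →ₗ[R] R, ∀ a, h (f a) = g a := by
  set gbar : (A ⧸ LinearMap.ker f) →ₗ[R] R := (LinearMap.ker f).liftQ g hle with hgbar
  set φ : (LinearMap.range f) →ₗ[R] R :=
    gbar ∘ₗ (f.quotKerEquivRange.symm : LinearMap.range f →ₗ[R] A ⧸ LinearMap.ker f) with hφ
  obtain ⟨h, hh⟩ := hinj.out (LinearMap.range f).subtype
    (LinearMap.range f).injective_subtype φ
  refine ⟨h, fun a => ?_⟩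
  have h1 : h (f a) = φ ⟨f a, ⟨a, rfl⟩⟩ := hh ⟨f a, ⟨a, rfl⟩⟩
  have h2 : f.quotKerEquivRange.symm ⟨f a, ⟨a, rfl⟩⟩ = Submodule.Quotient.mk a := by
    apply f.quotKerEquivRange.injective
    rw [LinearEquiv.apply_symm_apply]
    ext
    simp [LinearMap.quotKerEquivRange_apply_mk]
  rw [h1, hφ]
  simp only [LinearMap.coe_comp, Function.comp_apply, LinearEquiv.coe_coe, h2]
  simp [hgbar]

lemma subsingleton_ext_succ (hinj : Module.Injective R R) (X : ModuleCat.{u} R) (n : ℕ) :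
    Subsingleton (ExtMod R (n + 1) X (ModuleCat.of R R)) := by
  let P : ProjectiveResolution X := ProjectiveResolution.of X
  suffices h : Limits.IsZero (ExtMod R (n + 1) X (ModuleCat.of R R)) by
    have hid : (𝟙 (ExtMod R (n + 1) X (ModuleCat.of R R)) :
        ExtMod R (n + 1) X (ModuleCat.of R R) ⟶ _) = 0 := Limits.IsZero.eq_of_src h _ _
    refine ⟨fun a b => ?_⟩
    calc a = (𝟙 (ExtMod R (n + 1) X (ModuleCat.of R R)) :
            ExtMod R (n + 1) X (ModuleCat.of R R) ⟶ _) a := rfl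
      _ = (0 : ExtMod R (n + 1) X (ModuleCat.of R R) ⟶ _) a := by rw [hid]
      _ = (𝟙 (ExtMod R (n + 1) X (ModuleCat.of R R)) :
            ExtMod R (n + 1) X (ModuleCat.of R R) ⟶ _) b := by rw [hid]; rfl
      _ = b := rfl
  refine Limits.IsZero.of_iso ?_ (P.isoExt (n + 1) (ModuleCat.of R R))
  rw [← HomologicalComplex.exactAt_iff_isZero_homology,
    HomologicalComplex.exactAt_iff' _ n (n + 1) (n + 2) (by simp) (by simp),
    ShortComplex.moduleCat_exact_iff]
  -- exactness of the projective resolution at n+1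
  have hP := P.complex_exactAt_succ n
  rw [HomologicalComplex.exactAt_iff' _ (n + 2) (n + 1) n (by simp) (by simp),
    ShortComplex.moduleCat_exact_iff] at hP
  have hd : ∀ (i j : ℕ) (f : P.complex.X j ⟶ ModuleCat.of R R),
      (P.complex.linearYonedaObj R (ModuleCat.of R R)).d j i f = P.complex.d i j ≫ f :=
    fun _ _ _ => rfl
  have hP' : ∀ a : P.complex.X (n + 1), P.complex.d (n + 1) n a = 0 →
      ∃ b : P.complex.X (n + 2), P.complex.d (n + 2) (n + 1) b = a := hP
  show ∀ x : P.complex.X (n + 1) ⟶ ModuleCat.of R R,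
      (P.complex.linearYonedaObj R (ModuleCat.of R R)).d (n + 1) (n + 2) x = 0 →
      ∃ y : P.complex.X n ⟶ ModuleCat.of R R,
        (P.complex.linearYonedaObj R (ModuleCat.of R R)).d n (n + 1) y = x
  intro x hx
  have hx : P.complex.d (n + 2) (n + 1) ≫ x = 0 := (hd (n + 2) (n + 1) x).symm.trans hx
  have hle : LinearMap.ker (P.complex.d (n + 1) n).hom ≤
      LinearMap.ker x.hom := by
    intro a ha
    obtain ⟨b, hb⟩ := hP' a ha
    have hxb : x (P.complex.d (n + 2) (n + 1) b) = 0 := by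
        simpa using congr_arg (fun f => f.hom b) hx
    rw [LinearMap.mem_ker, ← hb]
    exact hxb
  obtain ⟨y, hy⟩ := extend_of_le_ker hinj
    (P.complex.d (n + 1) n).hom
    x.hom hle
  refine ⟨(ModuleCat.ofHom y : P.complex.X n ⟶ ModuleCat.of R R), ?_⟩
  refine (hd (n + 1) n (ModuleCat.ofHom y : P.complex.X n ⟶ ModuleCat.of R R)).trans ?_
  exact ModuleCat.hom_ext (LinearMap.ext fun a => by simpa using hy a)

/-- Over a self-injective commutative Noetherian ring, the evaluation map of every finitely
generated module is bijective. -/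
lemma bijective_eval (hinj : Module.Injective R R) [IsNoetherianRing R]
    (M : Type u) [AddCommGroup M] [Module R M] [Module.Finite R M] :
    Function.Bijective (Module.Dual.eval R M) := by
  obtain ⟨n, π, hπ⟩ := Module.Finite.exists_fin' R M
  have hK : Module.Finite R (LinearMap.ker π) := Module.Finite.iff_fg.mpr
    (IsNoetherian.noetherian _)
  obtain ⟨m, ρ, hρ⟩ := Module.Finite.exists_fin' R (LinearMap.ker π)
  set d : (Fin m → R) →ₗ[R] (Fin n → R) := (LinearMap.ker π).subtype ∘ₗ ρ with hd
  have hrange : LinearMap.range d = LinearMap.ker π := by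
    rw [hd, LinearMap.range_comp, LinearMap.range_eq_top.mpr hρ, Submodule.map_top,
      Submodule.range_subtype]
  constructor
  · -- injectivity
    rw [← LinearMap.ker_eq_bot, LinearMap.ker_eq_bot']
    intro x hx
    have hx : ∀ g : Module.Dual R M, g x = 0 := fun g => DFunLike.congr_fun hx g
    obtain ⟨u, hu⟩ := hπ x
    have hle : LinearMap.ker (d.dualMap) ≤
        LinearMap.ker ((Module.Dual.eval R (Fin n → R)) u) := by
      intro g hg
      have hg' : ∀ b, g (d b) = 0 := fun b => DFunLike.congr_fun (LinearMap.mem_ker.mp hg) b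
      -- g kills range d = ker π, hence factors through π
      have hle2 : LinearMap.ker π ≤ LinearMap.ker g := by
        intro a ha
        rw [← hrange] at ha
        obtain ⟨b, hb⟩ := ha
        rw [LinearMap.mem_ker, ← hb]
        exact hg' b
      obtain ⟨h, hh⟩ := extend_of_le_ker hinj π g hle2
      have : g u = h (π u) := (hh u).symm
      rw [LinearMap.mem_ker]
      simpa [this, hu] using hx h
    obtain ⟨Ψ, hΨ⟩ := extend_of_le_ker hinj d.dualMap (Module.Dual.eval R (Fin n → R) u) hle
    obtain ⟨v, hv⟩ := (Module.bijective_dual_eval R (Fin m → R)).2 Ψ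
    have huv : u = d v := by
      apply (Module.bijective_dual_eval R (Fin n → R)).1
      ext g
      have h1 : Ψ (d.dualMap g) = g u := hΨ g
      have h2 : Ψ (d.dualMap g) = g (d v) := by rw [← hv]; rfl
      simp only [Module.Dual.eval_apply]
      rw [← h1, h2]
    have : d v ∈ LinearMap.ker π := hrange ▸ LinearMap.mem_range_self d v
    rw [← hu, huv]
    exact this
  · -- surjectivity
    intro ξ
    obtain ⟨Φ, hΦ⟩ := hinj.out π.dualMap (LinearMap.dualMap_injective_of_surjective hπ) ξ
    obtain ⟨u, hu⟩ := (Module.bijective_dual_eval R (Fin n → R)).2 Φ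
    refine ⟨π u, ?_⟩
    ext g
    have h1 : Φ (π.dualMap g) = ξ g := hΦ g
    have h2 : Φ (π.dualMap g) = g (π u) := by rw [← hu]; rfl
    simp only [Module.Dual.eval_apply]
    rw [← h1, h2]

variable (R)

/-- Over an Artinian Gorenstein commutative Noetherian local ring (Artinian and injective as a
module over itself), every finitely generated module is totally reflexive. -/
theorem isTotallyReflexive_of_artinian_gorenstein [IsNoetherianRing R] [IsLocalRing R]
    [IsArtinianRing R] (hinj : Module.Injective R R)
    (X : ModuleCat.{u} R) (hX : Module.Finite R X) :
    IsTotallyReflexive R X := by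
  refine ⟨hX, ?_, ?_, ?_⟩
  · exact bijective_eval hinj X
  · intro i hi
    obtain ⟨n, rfl⟩ := Nat.exists_eq_add_of_lt hi
    simpa using subsingleton_ext_succ hinj X n
  · intro i hi
    obtain ⟨n, rfl⟩ := Nat.exists_eq_add_of_lt hi
    simpa using subsingleton_ext_succ hinj (ModuleCat.of R (Module.Dual R X)) n

end
end
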